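/- Perfect ICL accuracy of the finetuned weights (conclusion of the finetuning-dynamics theorem): Fix constants α_1 > 0, α_2 > 0, α_3 > 0 and consider the 2-head model with W_KQ^subj = β(Σ_{j=1}^M E(s_j) + α_1 E(p_{-1}))E([sep])^T, W_OV^subj = -Σ_j (Σ_{u∈U, u∉A_j} E(u)) E(s_j)^T, W_KQ^rel = β(Σ_{l=1}^L E(r_l) + α_3·((2/(3·L·U_L)) Σ_{u∈U} E(u) + (1/N) Σ_{i=1}^N E(p_{1-3i}) - (1/T) Σ_{i=1}^T E(p_{-i+1}) - (1/(3M)) Σ_{j=1}^M E(s_j)))E([sep])^T, and W_OV^rel = Σ_l (Σ_{u∈U_l} E(u)) E(r_l)^T + α_2·(N Σ_{l=1}^L u_l u_l^T + (U_L^2/M_ft) Σ_{j∈S_ft} (Σ_{l=1}^L E(a_j^l)) E(s_j)^T), where u_l = Σ_{a=1}^{U_L} E(u_a^l). Then for every ICL sequence X of length T = 3(N+1)-1 with any shared attribute type l* and any subjects j_1,...,j_{N+1} ∈ {1,...,M} (seen or held-out), in the limit β→∞ the unique maximizer of v ↦ E(v)^T f(X) is a_{j_{N+1}}^{l*}; i.e.,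 the model attains perfect last-token accuracy on ICL sequences for all subjects. -/

import Mathlib

open Filter Topology Finset Matrix

namespace CR

/-- Vocabulary tokens: `M` subjects, `L` attribute types each with `U` values,
`G` grammar tokens, `L` relation tokens, and a separator. -/
inductive Tok (M L U G : ℕ) : Type where
  | subj : Fin M → Tok M L U G
  | attr : Fin L → Fin U → Tok M L U G
  | gram : Fin G → Tok M L U G
  | rel  : Fin L → Tok M L U G
  | sep  : Tok M L U G
deriving DecidableEq, Fintype

/-- Embedding dimension: one coordinate per vocabulary token plus `P` positional coordinates. -/
abbrev Dim (M L U G P : ℕ) := Tok M L U G ⊕ Fin P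

abbrev Vec (M L U G P : ℕ) := Dim M L U G P → ℝ

variable {M L U G P : ℕ}

/-- One-hot token embedding `E(v)`. -/
def E (v : Tok M L U G) : Vec M L U G P :=
  fun i => if i = Sum.inl v then 1 else 0

/-- One-hot positional encoding for relative position `-k`
(`pos 0 = E(p₀)`, `pos 1 = E(p₋₁)`, ...); zero if `k ≥ P`. -/
def pos (k : ℕ) : Vec M L U G P :=
  fun i => match i with
  | Sum.inl _ => 0
  | Sum.inr j => if (j : ℕ) = k then 1 else 0

/-- Softmax attention weight of (0-indexed) row `j` among rows `0,…,t-1`, with query row `t-1`;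
row `i` carries the relative positional encoding `p_{-(t-1-i)}`. -/
noncomputable def attn (W : Matrix (Dim M L U G P) (Dim M L U G P) ℝ)
    (X : ℕ → Vec M L U G P) (t j : ℕ) : ℝ :=
  Real.exp ((X j + pos (t - 1 - j)) ⬝ᵥ W.mulVec (X (t - 1))) /
    ∑ i ∈ Finset.range t, Real.exp ((X i + pos (t - 1 - i)) ⬝ᵥ W.mulVec (X (t - 1)))

/-- Attention-head output `g_h^t(X)` (attention over the first `t` rows, query at row `t-1`). -/
noncomputable def gHead (W : Matrix (Dim M L U G P) (Dim M L U G P) ℝ)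
    (X : ℕ → Vec M L U G P) (t : ℕ) : Vec M L U G P :=
  ∑ j ∈ Finset.range t, attn W X t j • X j

/-- Token at (0-indexed) position `t` of a PT sequence with subject `jstar`:
block `k` occupies positions `k(S+3),…,k(S+3)+S+1` (subject, `S` middle tokens, separator),
followed (except after the last block) by the attribute `a_{jstar}^{ltype k}`. -/
def ptTok (S : ℕ) (jstar : Fin M) (ltype : ℕ → Fin L)
    (mid : ℕ → ℕ → Tok M L U G) (a : Fin M → Fin L → Fin U) (t : ℕ) : Tok M L U G :=
  let k := t / (S + 3)
  let r := t % (S + 3)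
  if r = 0 then Tok.subj jstar
  else if r ≤ S then mid k (r - 1)
  else if r = S + 1 then Tok.sep
  else Tok.attr (ltype k) (a jstar (ltype k))

/-- Token at (0-indexed) position `t` of an ICL sequence with shared attribute type `lstar`
and subjects `js 0, js 1, …`: the pattern is subject, separator, attribute, subject, … -/
def iclTok (a : Fin M → Fin L → Fin U) (js : ℕ → Fin M) (lstar : Fin L) (t : ℕ) :
    Tok M L U G :=
  if t % 3 = 0 then Tok.subj (js (t / 3))
  else if t % 3 = 1 then Tok.sep
  else Tok.attr lstar (a (js (t / 3)) lstar)


-- helper lemmas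

lemma dot_EE (v w : Tok M L U G) : (E v : Vec M L U G P) ⬝ᵥ E w = if v = w then 1 else 0 := by
  simp only [dotProduct, E, ite_mul, one_mul, zero_mul, Finset.sum_ite_eq', Finset.mem_univ,
    if_true, Sum.inl.injEq]

lemma dot_Epos (v : Tok M L U G) (k : ℕ) : (E v : Vec M L U G P) ⬝ᵥ pos k = 0 := by
  simp [dotProduct, E, pos, Finset.sum_ite_eq', Finset.mem_univ]

lemma dot_posE (k : ℕ) (v : Tok M L U G) : (pos k : Vec M L U G P) ⬝ᵥ E v = 0 := by
  refine Finset.sum_eq_zero fun i _ => ?_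
  cases i <;> simp [pos, E]

lemma dot_pospos (k k' : ℕ) (hk : k < P) :
    (pos k : Vec M L U G P) ⬝ᵥ pos k' = if k = k' then 1 else 0 := by
  have h : ∀ j : Fin P, ((j : ℕ) = k) = (j = ⟨k, hk⟩) := fun j => by
    simp [Fin.ext_iff]
  simp only [dotProduct, Fintype.sum_sum_type, pos, zero_mul, Finset.sum_const_zero, zero_add,
    h, ite_mul, one_mul, zero_mul, Finset.sum_ite_eq', Finset.mem_univ, if_true]

lemma dot_sum_right {ι : Type*} (s : Finset ι) (v : Vec M L U G P) (f : ι → Vec M L U G P) :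
    v ⬝ᵥ (∑ i ∈ s, f i) = ∑ i ∈ s, v ⬝ᵥ f i := by
  simp only [dotProduct, Finset.sum_apply, Finset.mul_sum]
  exact Finset.sum_comm

lemma dot_sum_left {ι : Type*} (s : Finset ι) (f : ι → Vec M L U G P) (v : Vec M L U G P) :
    (∑ i ∈ s, f i) ⬝ᵥ v = ∑ i ∈ s, f i ⬝ᵥ v := by
  simp only [dotProduct, Finset.sum_apply, Finset.sum_mul]
  exact Finset.sum_comm

lemma vmv_mulVec (x y z : Vec M L U G P) : (vecMulVec x y).mulVec z = (y ⬝ᵥ z) • x := by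
  ext i
  simp only [Matrix.mulVec, Matrix.vecMulVec_apply, dotProduct, Pi.smul_apply, smul_eq_mul,
    Finset.sum_mul]
  exact Finset.sum_congr rfl fun j _ => by ring

lemma sum_mulVec {ι : Type*} (s : Finset ι) (A : ι → Matrix (Dim M L U G P) (Dim M L U G P) ℝ)
    (x : Vec M L U G P) : (∑ i ∈ s, A i).mulVec x = ∑ i ∈ s, (A i).mulVec x := by
  ext j
  simp only [Matrix.mulVec, dotProduct, Matrix.sum_apply, Finset.sum_apply, Finset.sum_mul]
  exact Finset.sum_comm

lemma mulVec_sum {ι : Type*} (s : Finset ι) (A : Matrix (Dim M L U G P) (Dim M L U G P) ℝ)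
    (f : ι → Vec M L U G P) : A.mulVec (∑ i ∈ s, f i) = ∑ i ∈ s, A.mulVec (f i) := by
  ext j
  simp only [Matrix.mulVec, dotProduct, Matrix.sum_apply, Finset.sum_apply, Finset.mul_sum]
  exact Finset.sum_comm

lemma attn_eq (W : Matrix (Dim M L U G P) (Dim M L U G P) ℝ) (X : ℕ → Vec M L U G P)
    (t j : ℕ) (β : ℝ) :
    attn (β • W) X t j =
      Real.exp (β * ((X j + pos (t - 1 - j)) ⬝ᵥ W.mulVec (X (t - 1)))) /
        ∑ i ∈ Finset.range t,
          Real.exp (β * ((X i + pos (t - 1 - i)) ⬝ᵥ W.mulVec (X (t - 1)))) := by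
  simp [attn, Matrix.smul_mulVec, dotProduct_smul, smul_eq_mul]

lemma softmax_tendsto (t : ℕ) (s : ℕ → ℝ) (m : ℝ) (Jmax : Finset ℕ)
    (hJ : Jmax ⊆ Finset.range t) (hne : Jmax.Nonempty)
    (hmax : ∀ j ∈ Jmax, s j = m) (hlt : ∀ j ∈ Finset.range t, j ∉ Jmax → s j < m)
    (j : ℕ) (hj : j ∈ Finset.range t) :
    Tendsto (fun β : ℝ => Real.exp (β * s j) / ∑ i ∈ Finset.range t, Real.exp (β * s i))
      atTop (𝓝 (if j ∈ Jmax then ((Jmax.card : ℝ))⁻¹ else 0)) := by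
  have hfac : ∀ (β : ℝ) (i : ℕ), Real.exp (β * s i)
      = Real.exp (β * m) * Real.exp (β * (s i - m)) := by
    intro β i; rw [← Real.exp_add]; congr 1; ring
  have key : ∀ β : ℝ, Real.exp (β * s j) / ∑ i ∈ Finset.range t, Real.exp (β * s i)
      = Real.exp (β * (s j - m)) / ∑ i ∈ Finset.range t, Real.exp (β * (s i - m)) := by
    intro β
    rw [hfac β j, Finset.sum_congr rfl (fun i _ => hfac β i), ← Finset.mul_sum,
      mul_div_mul_left _ _ (Real.exp_ne_zero _)]
  simp only [key]
  have hnum : ∀ i ∈ Finset.range t, Tendsto (fun β : ℝ => Real.exp (β * (s i - m))) atTop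
      (𝓝 (if i ∈ Jmax then 1 else 0)) := by
    intro i hi
    by_cases h : i ∈ Jmax
    · simp [h, hmax i h]
    · simp only [h, if_false]
      have hneg : s i - m < 0 := by linarith [hlt i hi h]
      have : Tendsto (fun β : ℝ => β * (s i - m)) atTop atBot :=
        Tendsto.atTop_mul_const_of_neg hneg tendsto_id
      exact Real.tendsto_exp_atBot.comp this
  have hden : Tendsto (fun β : ℝ => ∑ i ∈ Finset.range t, Real.exp (β * (s i - m))) atTop
      (𝓝 (Jmax.card : ℝ)) := by
    have := tendsto_finset_sum (Finset.range t) hnum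
    have hcard : (∑ i ∈ Finset.range t, if i ∈ Jmax then (1:ℝ) else 0) = Jmax.card := by
      rw [Finset.sum_ite_mem, Finset.inter_eq_right.mpr hJ, Finset.sum_const, nsmul_eq_mul,
        mul_one]
    rwa [hcard] at this
  have hcard_pos : (0:ℝ) < Jmax.card := by
    exact_mod_cast Finset.card_pos.mpr hne
  have := (hnum j hj).div hden (ne_of_gt hcard_pos)
  by_cases h : j ∈ Jmax
  · simpa [h, one_div, Pi.div_def] using this
  · simpa [h, Pi.div_def] using this

/-- Perfect ICL accuracy of the finetuned weights (conclusion of the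
finetuning-dynamics theorem). -/
theorem finetuned_perfect_ICL_accuracy
    (M L U G P N : ℕ) (hN : 0 < N)
    (T : ℕ) (hT : T = 3 * (N + 1) - 1) (hP : T ≤ P)
    (a : Fin M → Fin L → Fin U) (Sft : Finset (Fin M))
    (α1 α2 α3 : ℝ) (hα1 : 0 < α1) (hα2 : 0 < α2) (hα3 : 0 < α3)
    (lstar : Fin L) (js : ℕ → Fin M)
    (X : ℕ → Vec M L U G P) (hX : ∀ t, X t = E (iclTok a js lstar t))
    (WKQsubj WOVsubj WKQrel WOVrel : Matrix (Dim M L U G P) (Dim M L U G P) ℝ)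
    (hKQsubj : WKQsubj = Matrix.vecMulVec
      ((∑ j : Fin M, E (Tok.subj j)) + α1 • pos 1) (E Tok.sep))
    (hOVsubj : WOVsubj = -(∑ j : Fin M, Matrix.vecMulVec
      (∑ l : Fin L, ∑ u ∈ Finset.univ.erase (a j l), E (Tok.attr l u))
      (E (Tok.subj j))))
    (hKQrel : WKQrel = Matrix.vecMulVec
      ((∑ l : Fin L, E (Tok.rel l))
        + α3 • ((2 / (3 * (L : ℝ) * U)) • (∑ l : Fin L, ∑ u : Fin U, E (Tok.attr l u))
          + (N : ℝ)⁻¹ • (∑ i ∈ Finset.range N, pos (3 * i + 2))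
          - (T : ℝ)⁻¹ • (∑ i ∈ Finset.range T, pos i)
          - (1 / (3 * (M : ℝ))) • (∑ j : Fin M, E (Tok.subj j))))
      (E Tok.sep))
    (hOVrel : WOVrel = (∑ l : Fin L, Matrix.vecMulVec
        (∑ u : Fin U, E (Tok.attr l u)) (E (Tok.rel l)))
      + α2 • ((N : ℝ) • (∑ l : Fin L, Matrix.vecMulVec
          (∑ u : Fin U, E (Tok.attr l u)) (∑ u : Fin U, E (Tok.attr l u)))
        + ((U : ℝ) ^ 2 / Sft.card) • (∑ j ∈ Sft, Matrix.vecMulVec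
          (∑ l : Fin L, E (Tok.attr l (a j l))) (E (Tok.subj j))))) :
    ∃ F : Tok M L U G → ℝ,
      (∀ v, Filter.Tendsto (fun β : ℝ =>
          E v ⬝ᵥ (WOVsubj.mulVec (gHead (β • WKQsubj) X T)
            + WOVrel.mulVec (gHead (β • WKQrel) X T)))
        Filter.atTop (𝓝 (F v))) ∧
      ∀ w, w ≠ Tok.attr lstar (a (js N) lstar) →
        F w < F (Tok.attr lstar (a (js N) lstar)) := by
  have hL : 0 < L := lstar.pos
  have hU : 0 < U := (a (js 0) lstar).pos
  have hT' : T = 3 * N + 2 := by omega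
  -- token values of X
  have hXs : ∀ i, X (3 * i) = E (Tok.subj (js i)) := by
    intro i
    have h1 : (3 * i) % 3 = 0 := by omega
    have h2 : (3 * i) / 3 = i := by omega
    rw [hX]; simp [iclTok, h1, h2]
  have hXp : ∀ i, X (3 * i + 1) = E (Tok.sep : Tok M L U G) := by
    intro i
    have h1 : (3 * i + 1) % 3 = 1 := by omega
    rw [hX]; simp [iclTok, h1]
  have hXa : ∀ i, X (3 * i + 2) = E (Tok.attr lstar (a (js i) lstar)) := by
    intro i
    have h1 : (3 * i + 2) % 3 = 2 := by omega
    have h2 : (3 * i + 2) / 3 = i := by omega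
    rw [hX]; simp [iclTok, h1, h2]
  have hXq : X (T - 1) = E (Tok.sep : Tok M L U G) := by
    have h : T - 1 = 3 * N + 1 := by omega
    rw [h]; exact hXp N
  -- subject-head key vector and scores
  have hmv1 : WKQsubj.mulVec (X (T - 1))
      = (∑ j : Fin M, E (Tok.subj j)) + α1 • pos 1 := by
    rw [hXq, hKQsubj, vmv_mulVec, dot_EE]
    simp
  have hval1 : ∀ i ∈ Finset.range T,
      (X i + pos (T - 1 - i)) ⬝ᵥ WKQsubj.mulVec (X (T - 1))
        = (if i % 3 = 0 then (1:ℝ) else 0) + (if i = 3 * N then α1 else 0) := by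
    intro i hi
    rw [Finset.mem_range] at hi
    have hkP : T - 1 - i < P := by omega
    have hiff : (T - 1 - i = 1) ↔ (i = 3 * N) := by omega
    rw [hmv1]
    have hrow : ∀ v : Tok M L U G,
        ((E v + pos (T - 1 - i) : Vec M L U G P)
          ⬝ᵥ ((∑ j : Fin M, E (Tok.subj j)) + α1 • pos 1))
          = (∑ j : Fin M, if v = Tok.subj j then (1:ℝ) else 0)
            + (if i = 3 * N then α1 else 0) := by
      intro v
      rw [add_dotProduct, dotProduct_add, dotProduct_add, dot_sum_right, dot_sum_right,
        dotProduct_smul, dotProduct_smul, dot_Epos, dot_pospos _ _ hkP]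
      simp only [dot_EE, dot_posE, Finset.sum_const_zero, smul_eq_mul, mul_zero, mul_ite,
        mul_one, add_zero, zero_add, hiff]
    rcases (show i % 3 = 0 ∨ i % 3 = 1 ∨ i % 3 = 2 by omega) with h | h | h
    · obtain ⟨q, rfl⟩ : ∃ q, i = 3 * q := ⟨i / 3, by omega⟩
      rw [hXs q, hrow]
      simp [h, Tok.subj.injEq, Finset.sum_ite_eq, eq_comm]
    · obtain ⟨q, rfl⟩ : ∃ q, i = 3 * q + 1 := ⟨i / 3, by omega⟩
      rw [hXp q, hrow]
      simp [h]
    · obtain ⟨q, rfl⟩ : ∃ q, i = 3 * q + 2 := ⟨i / 3, by omega⟩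
      rw [hXa q, hrow]
      simp [h]
  -- relation-head key vector and scores
  have hmv3 : WKQrel.mulVec (X (T - 1))
      = (∑ l : Fin L, E (Tok.rel l))
        + α3 • ((2 / (3 * (L : ℝ) * U)) • (∑ l : Fin L, ∑ u : Fin U, E (Tok.attr l u))
          + (N : ℝ)⁻¹ • (∑ i ∈ Finset.range N, pos (3 * i + 2))
          - (T : ℝ)⁻¹ • (∑ i ∈ Finset.range T, pos i)
          - (1 / (3 * (M : ℝ))) • (∑ j : Fin M, E (Tok.subj j))) := by
    rw [hXq, hKQrel, vmv_mulVec, dot_EE]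
    simp
  have hval3 : ∀ i ∈ Finset.range T,
      (X i + pos (T - 1 - i)) ⬝ᵥ WKQrel.mulVec (X (T - 1))
        = α3 * ((if i % 3 = 2 then 2 / (3 * (L:ℝ) * U) + (N:ℝ)⁻¹
            else if i % 3 = 0 then -(1 / (3 * (M:ℝ))) else 0) - (T:ℝ)⁻¹) := by
    intro i hi
    rw [Finset.mem_range] at hi
    have hkP : T - 1 - i < P := by omega
    rw [hmv3]
    -- dot of a token embedding with the key vector
    have hEk : ∀ v : Tok M L U G,
        (E v : Vec M L U G P) ⬝ᵥ
          ((∑ l : Fin L, E (Tok.rel l))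
            + α3 • ((2 / (3 * (L : ℝ) * U)) • (∑ l : Fin L, ∑ u : Fin U, E (Tok.attr l u))
              + (N : ℝ)⁻¹ • (∑ i ∈ Finset.range N, pos (3 * i + 2))
              - (T : ℝ)⁻¹ • (∑ i ∈ Finset.range T, pos i)
              - (1 / (3 * (M : ℝ))) • (∑ j : Fin M, E (Tok.subj j))))
          = (∑ l : Fin L, if v = Tok.rel l then (1:ℝ) else 0)
            + α3 * ((2 / (3 * (L : ℝ) * U))
                * (∑ l : Fin L, ∑ u : Fin U, if v = Tok.attr l u then (1:ℝ) else 0)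
              - (1 / (3 * (M : ℝ))) * (∑ j : Fin M, if v = Tok.subj j then (1:ℝ) else 0)) := by
      intro v
      rw [dotProduct_add, dotProduct_smul, dotProduct_sub, dotProduct_sub, dotProduct_add,
        dotProduct_smul, dotProduct_smul, dotProduct_smul, dotProduct_smul]
      rw [dot_sum_right, dot_sum_right, dot_sum_right, dot_sum_right]
      simp only [dot_EE, dot_Epos, dot_sum_right, Finset.sum_const_zero, smul_eq_mul,
        mul_zero, sub_zero]
      ring
    -- dot of a positional embedding with the key vector
    have hPk : (pos (T - 1 - i) : Vec M L U G P) ⬝ᵥ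
          ((∑ l : Fin L, E (Tok.rel l))
            + α3 • ((2 / (3 * (L : ℝ) * U)) • (∑ l : Fin L, ∑ u : Fin U, E (Tok.attr l u))
              + (N : ℝ)⁻¹ • (∑ i ∈ Finset.range N, pos (3 * i + 2))
              - (T : ℝ)⁻¹ • (∑ i ∈ Finset.range T, pos i)
              - (1 / (3 * (M : ℝ))) • (∑ j : Fin M, E (Tok.subj j))))
          = α3 * ((N:ℝ)⁻¹
              * (∑ k ∈ Finset.range N, if T - 1 - i = 3 * k + 2 then (1:ℝ) else 0)
            - (T:ℝ)⁻¹ * (∑ k ∈ Finset.range T, if T - 1 - i = k then (1:ℝ) else 0)) := by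
      rw [dotProduct_add, dotProduct_smul, dotProduct_sub, dotProduct_sub, dotProduct_add,
        dotProduct_smul, dotProduct_smul, dotProduct_smul, dotProduct_smul]
      rw [dot_sum_right, dot_sum_right, dot_sum_right, dot_sum_right]
      simp only [dot_posE, dot_pospos _ _ hkP, dot_sum_right, Finset.sum_const_zero,
        smul_eq_mul, mul_zero, sub_zero, zero_add]
      try ring
    have hsum_pos2 : (∑ k ∈ Finset.range T, if T - 1 - i = k then (1:ℝ) else 0) = 1 := by
      have h : ∀ k : ℕ, (T - 1 - i = k) ↔ (k = T - 1 - i) := fun k => eq_comm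
      simp only [h, Finset.sum_ite_eq', Finset.mem_range]
      rw [if_pos (by omega)]
    rw [add_dotProduct]
    rcases (show i % 3 = 0 ∨ i % 3 = 1 ∨ i % 3 = 2 by omega) with h | h | h
    · obtain ⟨q, rfl⟩ : ∃ q, i = 3 * q := ⟨i / 3, by omega⟩
      rw [hXs q, hEk, hPk, hsum_pos2]
      have hsum1 : (∑ k ∈ Finset.range N, if T - 1 - 3 * q = 3 * k + 2 then (1:ℝ) else 0)
          = 0 := by
        refine Finset.sum_eq_zero fun k _ => ?_
        rw [if_neg (by omega)]
      rw [hsum1]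
      have h1 : (∑ l : Fin L, if (Tok.subj (js q) : Tok M L U G) = Tok.rel l then (1:ℝ) else 0)
          = 0 := by simp
      have h2 : (∑ l : Fin L, ∑ u : Fin U,
          if (Tok.subj (js q) : Tok M L U G) = Tok.attr l u then (1:ℝ) else 0) = 0 := by simp
      have h3 : (∑ j : Fin M, if (Tok.subj (js q) : Tok M L U G) = Tok.subj j then (1:ℝ) else 0)
          = 1 := by simp [Tok.subj.injEq, Finset.sum_ite_eq, eq_comm]
      rw [h1, h2, h3, if_neg (by omega : ¬ (3 * q) % 3 = 2), if_pos h]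
      ring
    · obtain ⟨q, rfl⟩ : ∃ q, i = 3 * q + 1 := ⟨i / 3, by omega⟩
      rw [hXp q, hEk, hPk, hsum_pos2]
      have hsum1 : (∑ k ∈ Finset.range N,
          if T - 1 - (3 * q + 1) = 3 * k + 2 then (1:ℝ) else 0) = 0 := by
        refine Finset.sum_eq_zero fun k _ => ?_
        rw [if_neg (by omega)]
      rw [hsum1]
      have h1 : (∑ l : Fin L, if (Tok.sep : Tok M L U G) = Tok.rel l then (1:ℝ) else 0)
          = 0 := by simp
      have h2 : (∑ l : Fin L, ∑ u : Fin U,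
          if (Tok.sep : Tok M L U G) = Tok.attr l u then (1:ℝ) else 0) = 0 := by simp
      have h3 : (∑ j : Fin M, if (Tok.sep : Tok M L U G) = Tok.subj j then (1:ℝ) else 0)
          = 0 := by simp
      rw [h1, h2, h3, if_neg (by omega : ¬ (3 * q + 1) % 3 = 2),
        if_neg (by omega : ¬ (3 * q + 1) % 3 = 0)]
      ring
    · obtain ⟨q, rfl⟩ : ∃ q, i = 3 * q + 2 := ⟨i / 3, by omega⟩
      rw [hXa q, hEk, hPk, hsum_pos2]
      have hsum1 : (∑ k ∈ Finset.range N,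
          if T - 1 - (3 * q + 2) = 3 * k + 2 then (1:ℝ) else 0) = 1 := by
        have hq : q < N := by omega
        have hcond : ∀ k : ℕ, (T - 1 - (3 * q + 2) = 3 * k + 2) ↔ (k = N - 1 - q) := by
          intro k; omega
        simp only [hcond, Finset.sum_ite_eq', Finset.mem_range]
        rw [if_pos (by omega)]
      rw [hsum1]
      have h1 : (∑ l : Fin L,
          if (Tok.attr lstar (a (js q) lstar) : Tok M L U G) = Tok.rel l then (1:ℝ) else 0)
          = 0 := by simp
      have h2 : (∑ l : Fin L, ∑ u : Fin U,
          if (Tok.attr lstar (a (js q) lstar) : Tok M L U G) = Tok.attr l u then (1:ℝ) else 0)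
          = 1 := by
        rw [Finset.sum_eq_single lstar]
        · simp [Tok.attr.injEq, eq_comm, Finset.sum_ite_eq]
        · intro b _ hb
          refine Finset.sum_eq_zero fun u _ => ?_
          rw [if_neg]
          simp [Tok.attr.injEq]
          intro h'; exact absurd h'.symm hb
        · simp
      have h3 : (∑ j : Fin M,
          if (Tok.attr lstar (a (js q) lstar) : Tok M L U G) = Tok.subj j then (1:ℝ) else 0)
          = 0 := by simp
      rw [h1, h2, h3, if_pos (by omega : (3 * q + 2) % 3 = 2)]
      ring
  -- attention limits
  have hA1 : ∀ j ∈ Finset.range T, Tendsto (fun β : ℝ => attn (β • WKQsubj) X T j) atTop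
      (𝓝 (if j = 3 * N then (1:ℝ) else 0)) := by
    intro j hj
    have hJsub : ({3 * N} : Finset ℕ) ⊆ Finset.range T := by
      intro x hx
      rw [Finset.mem_singleton] at hx
      rw [Finset.mem_range]; omega
    have hlim := softmax_tendsto T
      (fun i => (X i + pos (T - 1 - i)) ⬝ᵥ WKQsubj.mulVec (X (T - 1)))
      (1 + α1) {3 * N} hJsub ⟨3 * N, Finset.mem_singleton_self _⟩
      (fun i hi => by
        rw [Finset.mem_singleton] at hi
        subst hi
        beta_reduce
        rw [hval1 _ (hJsub (Finset.mem_singleton_self _))]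
        rw [if_pos (by omega), if_pos rfl])
      (fun i hi hni => by
        rw [Finset.mem_singleton] at hni
        beta_reduce
        rw [hval1 i hi, if_neg hni]
        split_ifs with h1
        · linarith
        · linarith)
      j hj
    have hcard : (({3 * N} : Finset ℕ).card : ℝ)⁻¹ = 1 := by simp
    simp only [attn_eq]
    convert hlim using 2
    by_cases h : j = 3 * N
    · rw [if_pos h, if_pos (Finset.mem_singleton.mpr h), hcard]
    · rw [if_neg h, if_neg (fun hc => h (Finset.mem_singleton.mp hc))]
  have hfilt : (Finset.range T).filter (fun i => i % 3 = 2)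
      = (Finset.range N).image (fun i => 3 * i + 2) := by
    ext i
    simp only [Finset.mem_filter, Finset.mem_image, Finset.mem_range]
    constructor
    · rintro ⟨h1, h2⟩; exact ⟨i / 3, by omega, by omega⟩
    · rintro ⟨q, hq, rfl⟩; omega
  have hfiltcard : ((Finset.range T).filter (fun i => i % 3 = 2)).card = N := by
    rw [hfilt, Finset.card_image_of_injective _ (fun x y h => by omega), Finset.card_range]
  have hA3 : ∀ j ∈ Finset.range T, Tendsto (fun β : ℝ => attn (β • WKQrel) X T j) atTop
      (𝓝 (if j % 3 = 2 then ((N:ℝ))⁻¹ else 0)) := by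
    intro j hj
    have hLR : (0:ℝ) < 2 / (3 * (L:ℝ) * U) := by positivity
    have hNR : (0:ℝ) < ((N:ℝ))⁻¹ := by positivity
    have hMR : (0:ℝ) ≤ 1 / (3 * (M:ℝ)) := by positivity
    have hne3 : ((Finset.range T).filter (fun i : ℕ => i % 3 = 2)).Nonempty := by
      refine ⟨2, ?_⟩
      simp only [Finset.mem_filter, Finset.mem_range]
      exact ⟨by omega, trivial⟩
    have hlim := softmax_tendsto T
      (fun i => (X i + pos (T - 1 - i)) ⬝ᵥ WKQrel.mulVec (X (T - 1)))
      (α3 * ((2 / (3 * (L:ℝ) * U) + ((N:ℝ))⁻¹) - ((T:ℝ))⁻¹))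
      ((Finset.range T).filter (fun i => i % 3 = 2))
      (Finset.filter_subset _ _)
      hne3
      (fun i hi => by
        rw [Finset.mem_filter] at hi
        beta_reduce
        rw [hval3 i hi.1, if_pos hi.2])
      (fun i hi hni => by
        rw [Finset.mem_filter] at hni
        have hni' : ¬ i % 3 = 2 := fun h => hni ⟨hi, h⟩
        beta_reduce
        rw [hval3 i hi, if_neg hni']
        apply mul_lt_mul_of_pos_left _ hα3
        split_ifs with h1
        · linarith
        · linarith)
      j hj
    simp only [attn_eq]
    convert hlim using 2
    by_cases h : j % 3 = 2
    · have hmem : j ∈ (Finset.range T).filter (fun i : ℕ => i % 3 = 2) :=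
        Finset.mem_filter.mpr ⟨hj, h⟩
      rw [if_pos h, if_pos hmem, hfiltcard]
    · have hmem : j ∉ (Finset.range T).filter (fun i : ℕ => i % 3 = 2) :=
        fun hc => h (Finset.mem_filter.mp hc).2
      rw [if_neg h, if_neg hmem]
  -- OV outputs on the relevant one-hot inputs
  have hc1 : WOVsubj.mulVec (E (Tok.subj (js N)))
      = -(∑ l : Fin L, ∑ u ∈ Finset.univ.erase (a (js N) l), E (Tok.attr l u)) := by
    rw [hOVsubj, Matrix.neg_mulVec, sum_mulVec]
    congr 1
    have hterm : ∀ j : Fin M,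
        (Matrix.vecMulVec
            ((∑ l : Fin L, ∑ u ∈ Finset.univ.erase (a j l), E (Tok.attr l u)) : Vec M L U G P)
            ((E (Tok.subj j)) : Vec M L U G P)).mulVec (E (Tok.subj (js N)))
        = (if j = js N then (1:ℝ) else 0) •
            ((∑ l : Fin L, ∑ u ∈ Finset.univ.erase (a j l), E (Tok.attr l u)) : Vec M L U G P) := by
      intro j
      rw [vmv_mulVec, dot_EE]
      simp [Tok.subj.injEq]
    rw [Finset.sum_congr rfl fun j _ => hterm j]
    simp [ite_smul]
  have hc3 : ∀ b : Fin U, WOVrel.mulVec (E (Tok.attr lstar b))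
      = (α2 * (N:ℝ)) • (∑ u : Fin U, E (Tok.attr lstar u)) := by
    intro b
    rw [hOVrel, Matrix.add_mulVec, sum_mulVec, Matrix.smul_mulVec, Matrix.add_mulVec,
      Matrix.smul_mulVec, Matrix.smul_mulVec, sum_mulVec, sum_mulVec]
    have h1 : ∀ l : Fin L,
        (Matrix.vecMulVec ((∑ u : Fin U, E (Tok.attr l u)) : Vec M L U G P)
          ((E (Tok.rel l)) : Vec M L U G P)).mulVec (E (Tok.attr lstar b)) = 0 := by
      intro l
      rw [vmv_mulVec, dot_EE]
      simp
    have h2 : ∀ l : Fin L,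
        (Matrix.vecMulVec ((∑ u : Fin U, E (Tok.attr l u)) : Vec M L U G P)
          ((∑ u : Fin U, E (Tok.attr l u)) : Vec M L U G P)).mulVec (E (Tok.attr lstar b))
        = (if l = lstar then (1:ℝ) else 0)
            • ((∑ u : Fin U, E (Tok.attr l u)) : Vec M L U G P) := by
      intro l
      rw [vmv_mulVec]
      congr 1
      rw [dot_sum_left]
      simp only [dot_EE, Tok.attr.injEq]
      by_cases hl : l = lstar
      · subst hl
        simp [Finset.sum_ite_eq, eq_comm]
      · simp [hl]
    have h3 : ∀ j ∈ Sft,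
        (Matrix.vecMulVec ((∑ l : Fin L, E (Tok.attr l (a j l))) : Vec M L U G P)
          ((E (Tok.subj j)) : Vec M L U G P)).mulVec (E (Tok.attr lstar b)) = 0 := by
      intro j _
      rw [vmv_mulVec, dot_EE]
      simp
    rw [Finset.sum_congr rfl fun l _ => h1 l, Finset.sum_congr rfl fun l _ => h2 l,
      Finset.sum_congr rfl h3]
    simp only [Finset.sum_const_zero, zero_add, smul_zero, add_zero, ite_smul, one_smul,
      zero_smul]
    rw [Finset.sum_ite_eq' Finset.univ lstar
      (fun l => (∑ u : Fin U, E (Tok.attr l u) : Vec M L U G P))]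
    simp only [Finset.mem_univ, if_true]
    rw [smul_smul]
  have hNposR : (0:ℝ) < (N:ℝ) := by exact_mod_cast hN
  -- closed form of the limit
  have hFval : ∀ v : Tok M L U G,
      (E v ⬝ᵥ ((-(∑ l : Fin L, ∑ u ∈ Finset.univ.erase (a (js N) l), E (Tok.attr l u)))
          : Vec M L U G P))
        + E v ⬝ᵥ (((α2 * (N:ℝ)) • (∑ u : Fin U, E (Tok.attr lstar u))) : Vec M L U G P)
      = -(∑ l : Fin L, ∑ u ∈ Finset.univ.erase (a (js N) l),
            if v = Tok.attr l u then (1:ℝ) else 0)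
        + α2 * (N:ℝ) * (∑ u : Fin U, if v = Tok.attr lstar u then (1:ℝ) else 0) := by
    intro v
    simp only [dotProduct_neg, dotProduct_smul, smul_eq_mul, dot_sum_right, dot_EE]
    try ring
  refine ⟨fun v =>
      (E v ⬝ᵥ ((-(∑ l : Fin L, ∑ u ∈ Finset.univ.erase (a (js N) l), E (Tok.attr l u)))
          : Vec M L U G P))
        + E v ⬝ᵥ (((α2 * (N:ℝ)) • (∑ u : Fin U, E (Tok.attr lstar u))) : Vec M L U G P),
    ?_, ?_⟩
  · -- convergence
    intro v
    have hexp : ∀ β : ℝ,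
        E v ⬝ᵥ (WOVsubj.mulVec (gHead (β • WKQsubj) X T)
          + WOVrel.mulVec (gHead (β • WKQrel) X T))
        = (∑ j ∈ Finset.range T, attn (β • WKQsubj) X T j * (E v ⬝ᵥ WOVsubj.mulVec (X j)))
          + (∑ j ∈ Finset.range T, attn (β • WKQrel) X T j * (E v ⬝ᵥ WOVrel.mulVec (X j))) := by
      intro β
      rw [dotProduct_add]
      congr 1
      · rw [gHead, mulVec_sum, dot_sum_right]
        refine Finset.sum_congr rfl fun j _ => ?_
        rw [Matrix.mulVec_smul, dotProduct_smul, smul_eq_mul]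
      · rw [gHead, mulVec_sum, dot_sum_right]
        refine Finset.sum_congr rfl fun j _ => ?_
        rw [Matrix.mulVec_smul, dotProduct_smul, smul_eq_mul]
    have hs1 : (∑ j ∈ Finset.range T,
          (if j = 3 * N then (1:ℝ) else 0) * (E v ⬝ᵥ WOVsubj.mulVec (X j)))
        = E v ⬝ᵥ ((-(∑ l : Fin L, ∑ u ∈ Finset.univ.erase (a (js N) l), E (Tok.attr l u)))
            : Vec M L U G P) := by
      rw [Finset.sum_eq_single (3 * N)]
      · rw [if_pos rfl, one_mul, hXs N, hc1]
      · intro b _ hb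
        rw [if_neg hb, zero_mul]
      · intro h
        exact absurd (Finset.mem_range.mpr (by omega)) h
    have hs3 : (∑ j ∈ Finset.range T,
          (if j % 3 = 2 then ((N:ℝ))⁻¹ else 0) * (E v ⬝ᵥ WOVrel.mulVec (X j)))
        = E v ⬝ᵥ (((α2 * (N:ℝ)) • (∑ u : Fin U, E (Tok.attr lstar u))) : Vec M L U G P) := by
      have hterm : ∀ j ∈ Finset.range T,
          (if j % 3 = 2 then ((N:ℝ))⁻¹ else 0) * (E v ⬝ᵥ WOVrel.mulVec (X j))
          = if j % 3 = 2 then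
              ((N:ℝ))⁻¹ * (E v ⬝ᵥ (((α2 * (N:ℝ)) • (∑ u : Fin U, E (Tok.attr lstar u)))
                : Vec M L U G P))
            else 0 := by
        intro j hj
        by_cases h : j % 3 = 2
        · rw [if_pos h, if_pos h]
          obtain ⟨q, rfl⟩ : ∃ q, j = 3 * q + 2 := ⟨j / 3, by omega⟩
          rw [hXa q, hc3]
        · rw [if_neg h, if_neg h, zero_mul]
      rw [Finset.sum_congr rfl hterm, ← Finset.sum_filter, Finset.sum_const, hfiltcard,
        nsmul_eq_mul, ← mul_assoc, mul_inv_cancel₀ (ne_of_gt hNposR), one_mul]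
    have hlim1 : Tendsto (fun β : ℝ => ∑ j ∈ Finset.range T,
        attn (β • WKQsubj) X T j * (E v ⬝ᵥ WOVsubj.mulVec (X j))) atTop
        (𝓝 (∑ j ∈ Finset.range T,
          (if j = 3 * N then (1:ℝ) else 0) * (E v ⬝ᵥ WOVsubj.mulVec (X j)))) :=
      tendsto_finset_sum _ (fun j hj => (hA1 j hj).mul_const _)
    have hlim3 : Tendsto (fun β : ℝ => ∑ j ∈ Finset.range T,
        attn (β • WKQrel) X T j * (E v ⬝ᵥ WOVrel.mulVec (X j))) atTop
        (𝓝 (∑ j ∈ Finset.range T,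
          (if j % 3 = 2 then ((N:ℝ))⁻¹ else 0) * (E v ⬝ᵥ WOVrel.mulVec (X j)))) :=
      tendsto_finset_sum _ (fun j hj => (hA3 j hj).mul_const _)
    beta_reduce
    rw [← hs1, ← hs3]
    simp only [hexp]
    exact hlim1.add hlim3
  · -- strict maximality
    intro w hw
    beta_reduce
    rw [hFval, hFval]
    have htar1 : (∑ l : Fin L, ∑ u ∈ Finset.univ.erase (a (js N) l),
        if (Tok.attr lstar (a (js N) lstar) : Tok M L U G) = Tok.attr l u then (1:ℝ) else 0)
        = 0 := by
      refine Finset.sum_eq_zero fun l _ => Finset.sum_eq_zero fun u hu => ?_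
      rw [Finset.mem_erase] at hu
      by_cases hc : (Tok.attr lstar (a (js N) lstar) : Tok M L U G) = Tok.attr l u
      · exfalso
        rw [Tok.attr.injEq] at hc
        obtain ⟨rfl, rfl⟩ := hc
        exact hu.1 rfl
      · rw [if_neg hc]
    have htar2 : (∑ u : Fin U,
        if (Tok.attr lstar (a (js N) lstar) : Tok M L U G) = Tok.attr lstar u then (1:ℝ) else 0)
        = 1 := by
      simp [Tok.attr.injEq, Finset.sum_ite_eq, eq_comm]
    rw [htar1, htar2]
    have hα2N : (0:ℝ) < α2 * (N:ℝ) := mul_pos hα2 hNposR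
    cases w with
    | attr l u =>
      have h2 : (∑ u' : Fin U,
          if (Tok.attr l u : Tok M L U G) = Tok.attr lstar u' then (1:ℝ) else 0)
          = if l = lstar then 1 else 0 := by
        by_cases hl : l = lstar
        · subst hl
          rw [if_pos rfl]
          simp [Tok.attr.injEq, Finset.sum_ite_eq, eq_comm]
        · rw [if_neg hl]
          refine Finset.sum_eq_zero fun u' _ => ?_
          rw [if_neg]
          intro hc
          rw [Tok.attr.injEq] at hc
          exact hl hc.1
      have h1 : (∑ l' : Fin L, ∑ u' ∈ Finset.univ.erase (a (js N) l'),
          if (Tok.attr l u : Tok M L U G) = Tok.attr l' u' then (1:ℝ) else 0)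
          = if u = a (js N) l then 0 else 1 := by
        rw [Finset.sum_eq_single l]
        · by_cases hu : u = a (js N) l
          · rw [if_pos hu]
            refine Finset.sum_eq_zero fun u' hu' => ?_
            rw [Finset.mem_erase] at hu'
            rw [if_neg]
            intro hc
            rw [Tok.attr.injEq] at hc
            exact hu'.1 (hc.2.symm.trans hu)
          · rw [if_neg hu]
            have hcond : ∀ u' : Fin U,
                ((Tok.attr l u : Tok M L U G) = Tok.attr l u') = (u' = u) := by
              intro u'
              simp [Tok.attr.injEq, eq_comm]
            simp only [hcond, Finset.sum_ite_eq', Finset.mem_erase, Finset.mem_univ, and_true]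
            rw [if_pos hu]
        · intro l' _ hl'
          refine Finset.sum_eq_zero fun u' _ => ?_
          rw [if_neg]
          intro hc
          rw [Tok.attr.injEq] at hc
          exact hl' hc.1.symm
        · intro h
          exact absurd (Finset.mem_univ l) h
      rw [h1, h2]
      by_cases hl : l = lstar
      · subst hl
        have hu : u ≠ a (js N) l := fun h => hw (by rw [h])
        rw [if_neg hu, if_pos rfl]
        linarith
      · rw [if_neg hl]
        split_ifs <;> linarith
    | subj j =>
      simp only [show ∀ l (u : Fin U), ((Tok.subj j : Tok M L U G) = Tok.attr l u) = False by
        intro l u; simp, if_false, Finset.sum_const_zero, neg_zero, mul_zero, add_zero,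
        zero_add, mul_one]
      linarith
    | gram g =>
      simp only [show ∀ l (u : Fin U), ((Tok.gram g : Tok M L U G) = Tok.attr l u) = False by
        intro l u; simp, if_false, Finset.sum_const_zero, neg_zero, mul_zero, add_zero,
        zero_add, mul_one]
      linarith
    | rel l =>
      simp only [show ∀ l' (u : Fin U), ((Tok.rel l : Tok M L U G) = Tok.attr l' u) = False by
        intro l' u; simp, if_false, Finset.sum_const_zero, neg_zero, mul_zero, add_zero,
        zero_add, mul_one]
      linarith
    | sep =>
      simp only [show ∀ l (u : Fin U), ((Tok.sep : Tok M L U G) = Tok.attr l u) = False by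
        intro l u; simp, if_false, Finset.sum_const_zero, neg_zero, mul_zero, add_zero,
        zero_add, mul_one]
      linarith


end CR
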